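/- Let M be an optimal GK-model in which all instances of □φ → □□φ and ◇◇φ → ◇φ are valid. Then S is fuzzy-transitive: min(S(x,y), S(y,z)) ≤ S(x,z) for all x,y,z ∈ W. -/
import Mathlib

open scoped Classical

noncomputable def gimp (a b : ℝ) : ℝ := if a ≤ b then 1 else b

inductive GForm : Type where
  | bot : GForm
  | var : ℕ → GForm
  | and : GForm → GForm → GForm
  | or : GForm → GForm → GForm
  | imp : GForm → GForm → GForm
  | box : GForm → GForm
  | dia : GForm → GForm

def GForm.neg (φ : GForm) : GForm := φ.imp .bot

noncomputable def ev {W : Type} (S : W → W → ℝ) (e : ℕ → W → ℝ) : GForm → W → ℝ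
  | .bot, _ => 0
  | .var p, x => e p x
  | .and φ ψ, x => min (ev S e φ x) (ev S e ψ x)
  | .or φ ψ, x => max (ev S e φ x) (ev S e ψ x)
  | .imp φ ψ, x => gimp (ev S e φ x) (ev S e ψ x)
  | .box φ, x => ⨅ y, gimp (S x y) (ev S e φ y)
  | .dia φ, x => ⨆ y, min (S x y) (ev S e φ y)

noncomputable def Splus {W : Type} (S : W → W → ℝ) (e : ℕ → W → ℝ) (x y : W) : ℝ :=
  min (⨅ φ : GForm, gimp (ev S e (.box φ) x) (ev S e φ y))
      (⨅ φ : GForm, gimp (ev S e φ y) (ev S e (.dia φ) x))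

instance : Nonempty GForm := ⟨.bot⟩

lemma gimp_nonneg {a b : ℝ} (hb : 0 ≤ b) : 0 ≤ gimp a b := by
  unfold gimp; split <;> linarith

lemma gimp_le_one {a b : ℝ} (hb : b ≤ 1) : gimp a b ≤ 1 := by
  unfold gimp; split <;> linarith

lemma le_of_le_gimp {s a b : ℝ} (h : s ≤ gimp a b) : min s a ≤ b := by
  unfold gimp at h; split at h
  · exact le_trans (min_le_right _ _) ‹a ≤ b›
  · exact le_trans (min_le_left _ _) h

lemma le_gimp_of {s a b : ℝ} (hs : s ≤ 1) (h : min s a ≤ b) : s ≤ gimp a b := by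
  unfold gimp; split
  · exact hs
  · rcases min_le_iff.1 h with h1 | h1
    · exact h1
    · linarith

lemma le_of_gimp_eq_one {a b : ℝ} (ha : a ≤ 1) (h : gimp a b = 1) : a ≤ b := by
  unfold gimp at h; split at h
  · assumption
  · linarith

lemma ev_mem {W : Type} [Nonempty W] (S : W → W → ℝ) (e : ℕ → W → ℝ)
    (hS : ∀ x y, S x y ∈ Set.Icc (0:ℝ) 1) (he : ∀ p x, e p x ∈ Set.Icc (0:ℝ) 1) :
    ∀ (φ : GForm) (x : W), ev S e φ x ∈ Set.Icc (0:ℝ) 1 := by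
  intro φ
  induction φ with
  | bot => intro x; simp [ev]
  | var p => intro x; exact he p x
  | and φ ψ ih1 ih2 =>
    intro x
    exact ⟨le_min (ih1 x).1 (ih2 x).1, le_trans (min_le_left _ _) (ih1 x).2⟩
  | or φ ψ ih1 ih2 =>
    intro x
    exact ⟨le_trans (ih1 x).1 (le_max_left _ _), max_le (ih1 x).2 (ih2 x).2⟩
  | imp φ ψ ih1 ih2 =>
    intro x
    exact ⟨gimp_nonneg (ih2 x).1, gimp_le_one (ih2 x).2⟩
  | box φ ih =>
    intro x
    constructor
    · exact le_ciInf fun y => gimp_nonneg (ih y).1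
    · exact ciInf_le_of_le ⟨0, fun r ⟨y, hy⟩ => hy ▸ gimp_nonneg (ih y).1⟩
        (Classical.arbitrary W) (gimp_le_one (ih _).2)
  | dia φ ih =>
    intro x
    constructor
    · refine le_ciSup_of_le ⟨1, fun r ⟨y, hy⟩ => hy ▸ le_trans (min_le_right _ _) (ih y).2⟩
        (Classical.arbitrary W) (le_min (hS x _).1 (ih _).1)
    · exact ciSup_le fun y => le_trans (min_le_right _ _) (ih y).2

theorem stmt12 (W : Type) [Nonempty W] (S : W → W → ℝ) (e : ℕ → W → ℝ)
    (hS : ∀ x y, S x y ∈ Set.Icc (0:ℝ) 1) (he : ∀ p x, e p x ∈ Set.Icc (0:ℝ) 1)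
    (hopt : ∀ x y, S x y = Splus S e x y)
    (h4 : ∀ (φ : GForm) (x : W), ev S e (.imp (.box φ) (.box (.box φ))) x = 1 ∧
      ev S e (.imp (.dia (.dia φ)) (.dia φ)) x = 1) :
    ∀ x y z, min (S x y) (S y z) ≤ S x z := by
  intro x y z
  have hev := ev_mem S e hS he
  set m := min (S x y) (S y z) with hm
  have hm1 : m ≤ 1 := le_trans (min_le_left _ _) (hS x y).2
  -- basic Splus consequences
  have hSle : ∀ (u v : W) (φ : GForm),
      min (S u v) (ev S e (.box φ) u) ≤ ev S e φ v := by
    intro u v φ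
    apply le_of_le_gimp
    calc S u v = Splus S e u v := hopt u v
      _ ≤ _ := le_trans (min_le_left _ _)
          (ciInf_le ⟨0, fun r ⟨ψ, hψ⟩ => hψ ▸ gimp_nonneg (hev ψ v).1⟩ φ)
  have hSle' : ∀ (u v : W) (φ : GForm),
      min (S u v) (ev S e φ v) ≤ ev S e (.dia φ) u := by
    intro u v φ
    apply le_of_le_gimp
    calc S u v = Splus S e u v := hopt u v
      _ ≤ _ := le_trans (min_le_right _ _)
          (ciInf_le ⟨0, fun r ⟨ψ, hψ⟩ => hψ ▸ gimp_nonneg (hev (.dia ψ) u).1⟩ φ)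
  -- axiom consequences
  have hbox : ∀ (φ : GForm) (u : W), ev S e (.box φ) u ≤ ev S e (.box (.box φ)) u := by
    intro φ u
    exact le_of_gimp_eq_one (hev (.box φ) u).2 (h4 φ u).1
  have hdia : ∀ (φ : GForm) (u : W), ev S e (.dia (.dia φ)) u ≤ ev S e (.dia φ) u := by
    intro φ u
    exact le_of_gimp_eq_one (hev (.dia (.dia φ)) u).2 (h4 φ u).2
  rw [hopt x z]
  apply le_min
  · apply le_ciInf
    intro φ
    apply le_gimp_of hm1
    -- min m (ev box φ x) ≤ ev φ z
    have h1 : min (S x y) (ev S e (.box (.box φ)) x) ≤ ev S e (.box φ) y := hSle x y (.box φ)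
    have h2 : min (S y z) (ev S e (.box φ) y) ≤ ev S e φ z := hSle y z φ
    have h3 := hbox φ x
    calc min m (ev S e (.box φ) x)
        ≤ min (S y z) (min (S x y) (ev S e (.box (.box φ)) x)) := by
          exact le_min (le_trans (min_le_left _ _) (min_le_right _ _))
            (le_min (le_trans (min_le_left _ _) (min_le_left _ _))
              (le_trans (min_le_right _ _) h3))
      _ ≤ min (S y z) (ev S e (.box φ) y) := min_le_min le_rfl h1
      _ ≤ _ := h2
  · apply le_ciInf
    intro φ
    apply le_gimp_of hm1
    have h1 : min (S y z) (ev S e φ z) ≤ ev S e (.dia φ) y := hSle' y z φ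
    have h2 : min (S x y) (ev S e (.dia φ) y) ≤ ev S e (.dia (.dia φ)) x := hSle' x y (.dia φ)
    have h3 := hdia φ x
    calc min m (ev S e φ z)
        ≤ min (S x y) (min (S y z) (ev S e φ z)) := by
          exact le_min (le_trans (min_le_left _ _) (min_le_left _ _))
            (le_min (le_trans (min_le_left _ _) (min_le_right _ _)) (min_le_right _ _))
      _ ≤ min (S x y) (ev S e (.dia φ) y) := min_le_min le_rfl h1
      _ ≤ ev S e (.dia (.dia φ)) x := h2
      _ ≤ _ := h3
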